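/- The family of all finite partial orders does not have the amalgamation property: there exist finite partial orders S, P, Q and epimorphisms φ : P → S and ψ : Q → S such that there are no finite partial order D and epimorphisms ψ₁ : D → P and ψ₂ : D → Q with φ ∘ ψ₁ = ψ ∘ ψ₂. -/

import Mathlib

/-- The Hasse relation of a partial order: `a R b` iff `a = b` or one covers the other. -/
def HasseRel {P : Type*} [PartialOrder P] (a b : P) : Prop :=
  a = b ∨ a ⋖ b ∨ b ⋖ a

/-- An epimorphism of finite partial orders (with their Hasse relations): a surjection such
that the order and the Hasse relation on the codomain are exactly the images of the
corresponding relations on the domain. -/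
def IsPosetEpi {Q P : Type*} [PartialOrder Q] [PartialOrder P] (φ : Q → P) : Prop :=
  Function.Surjective φ ∧
    (∀ a b : Q, a ≤ b → φ a ≤ φ b) ∧
    (∀ a b : Q, HasseRel a b → HasseRel (φ a) (φ b)) ∧
    (∀ a b : P, a ≤ b → ∃ a' b' : Q, a' ≤ b' ∧ φ a' = a ∧ φ b' = b) ∧
    (∀ a b : P, HasseRel a b → ∃ a' b' : Q, HasseRel a' b' ∧ φ a' = a ∧ φ b' = b)

/-- The Hasse diagram of a partial order, as a simple graph. -/
def hasseGraph (P : Type*) [PartialOrder P] : SimpleGraph P :=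
  SimpleGraph.fromRel (fun a b => HasseRel a b)

/-- An H-forest is a partial order whose Hasse diagram contains no cycles. -/
def IsHForest (P : Type*) [PartialOrder P] : Prop :=
  (hasseGraph P).IsAcyclic

/-- The maximal chains of the partial order are pairwise disjoint (membership in `F₀`). -/
def HasDisjointMaxChains (P : Type*) [PartialOrder P] : Prop :=
  ∀ C C' : Set P, IsMaxChain (· ≤ ·) C → IsMaxChain (· ≤ ·) C' → C ≠ C' → Disjoint C C'

/-! ### Auxiliary decidability instances -/

instance sumDecLE {α β : Type*} [LE α] [LE β]
    [DecidableRel ((· ≤ ·) : α → α → Prop)] [DecidableRel ((· ≤ ·) : β → β → Prop)] :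
    DecidableRel ((· ≤ ·) : α ⊕ β → α ⊕ β → Prop)
  | Sum.inl a, Sum.inl b => decidable_of_iff (a ≤ b) Sum.inl_le_inl_iff.symm
  | Sum.inl _, Sum.inr _ => Decidable.isFalse Sum.not_inl_le_inr
  | Sum.inr _, Sum.inl _ => Decidable.isFalse Sum.not_inr_le_inl
  | Sum.inr a, Sum.inr b => decidable_of_iff (a ≤ b) Sum.inr_le_inr_iff.symm

instance (priority := 50) decLTofLE {α : Type*} [Preorder α]
    [DecidableRel ((· ≤ ·) : α → α → Prop)] : DecidableRel ((· < ·) : α → α → Prop) :=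
  fun a b => decidable_of_iff (a ≤ b ∧ ¬ b ≤ a) (lt_iff_le_not_ge).symm

instance covByDec {α : Type*} [Preorder α] [Fintype α]
    [DecidableRel ((· < ·) : α → α → Prop)] : DecidableRel ((· ⋖ ·) : α → α → Prop) :=
  fun a b => decidable_of_iff (a < b ∧ ∀ c, a < c → ¬ c < b) Iff.rfl

instance hasseDec {α : Type*} [PartialOrder α] [Fintype α] [DecidableEq α]
    [DecidableRel ((· < ·) : α → α → Prop)] : DecidableRel (HasseRel (P := α)) :=
  fun a b => decidable_of_iff (a = b ∨ a ⋖ b ∨ b ⋖ a) Iff.rfl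

/-! ### The counterexample

`SS` is the "diamond" poset `0 < a, b < 1` with `a = (1,0)`, `b = (0,1)` incomparable.
`PP` is the disjoint union of two 3-chains, one mapped by `φ0` onto the chain `0 < b < 1`
and the other onto `0 < a < 1`.
`QQ` is the disjoint union of a 3-chain mapped by `ψ0` onto `0 < a < 1`, a 2-chain mapped
onto `0 < b`, and a 2-chain mapped onto `b < 1`.  Crucially, in `QQ` there is no chain
from a point over `0` to a point over `1` passing through a point over `b`. -/

abbrev SS : Type := Fin 2 × Fin 2
abbrev PP : Type := Fin 3 ⊕ Fin 3
abbrev QQ : Type := Fin 3 ⊕ (Fin 2 ⊕ Fin 2)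

def φ0 : PP → SS
  | Sum.inl i => if i = 0 then (0,0) else if i = 1 then (0,1) else (1,1)
  | Sum.inr i => if i = 0 then (0,0) else if i = 1 then (1,0) else (1,1)

def ψ0 : QQ → SS
  | Sum.inl i => if i = 0 then (0,0) else if i = 1 then (1,0) else (1,1)
  | Sum.inr (Sum.inl j) => if j = 0 then (0,0) else (0,1)
  | Sum.inr (Sum.inr j) => if j = 0 then (0,1) else (1,1)

set_option synthInstance.maxSize 1024

lemma φ0_epi : IsPosetEpi φ0 := ⟨by decide, by decide, by decide, by decide, by decide⟩

lemma ψ0_epi : IsPosetEpi ψ0 := ⟨by decide, by decide, by decide, by decide, by decide⟩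

lemma key1 : ∀ y y' : QQ, y ≤ y' → ψ0 y = (0,0) → ψ0 y' = (1,1) →
    y = Sum.inl 0 ∧ y' = Sum.inl 2 := by decide

lemma key2 : ∀ y : QQ, HasseRel (Sum.inl 0 : QQ) y → (Sum.inl 0 : QQ) ≤ y →
    y = Sum.inl 0 ∨ y = Sum.inl 1 := by decide

lemma key3 : ∀ x : PP, (Sum.inl 0 : PP) ≤ x → x ≤ Sum.inl 2 → φ0 x ≠ (1,0) := by decide

/-- The family of all finite partial orders does not have the amalgamation property. -/
theorem stmt_2 :
    ∃ (S P Q : Type) (_ : Fintype S) (_ : Fintype P) (_ : Fintype Q)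
      (_ : PartialOrder S) (_ : PartialOrder P) (_ : PartialOrder Q)
      (φ : P → S) (ψ : Q → S),
      IsPosetEpi φ ∧ IsPosetEpi ψ ∧
        ∀ (D : Type) (_ : Fintype D) (_ : PartialOrder D) (ψ₁ : D → P) (ψ₂ : D → Q),
          IsPosetEpi ψ₁ → IsPosetEpi ψ₂ → φ ∘ ψ₁ ≠ ψ ∘ ψ₂ := by
  refine ⟨SS, PP, QQ, inferInstance, inferInstance, inferInstance, inferInstance,
    inferInstance, inferInstance, φ0, ψ0, φ0_epi, ψ0_epi, ?_⟩
  intro D _ _ ψ₁ ψ₂ h₁ h₂ heq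
  classical
  obtain ⟨-, hm1, -, hl1, -⟩ := h₁
  obtain ⟨-, hm2, hh2, -, -⟩ := h₂
  have hχ : ∀ x : D, φ0 (ψ₁ x) = ψ0 (ψ₂ x) := fun x => congrFun heq x
  -- lift the pair `inl 0 ≤ inl 2` of `PP` (the chain over `0 < b < 1`)
  obtain ⟨d, d', hdd', hd, hd'⟩ := hl1 (Sum.inl 0) (Sum.inl 2) (by decide)
  have hq0 : ψ0 (ψ₂ d) = (0,0) := by rw [← hχ d, hd]; decide
  have hq1 : ψ0 (ψ₂ d') = (1,1) := by rw [← hχ d', hd']; decide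
  obtain ⟨hy, hy'⟩ := key1 (ψ₂ d) (ψ₂ d') (hm2 _ _ hdd') hq0 hq1
  -- a maximal element `z₀` between `d` and `d'` with `ψ₂ z₀ = inl 0`
  set Zs : Finset D :=
    Finset.univ.filter (fun z : D => d ≤ z ∧ z ≤ d' ∧ ψ₂ z = Sum.inl 0) with hZs
  have hdZ : d ∈ Zs := by
    simp only [hZs, Finset.mem_filter, Finset.mem_univ, true_and]
    exact ⟨le_refl d, hdd', hy⟩
  obtain ⟨z₀, hz₀mem, hmax⟩ := Zs.exists_maximal ⟨d, hdZ⟩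
  simp only [hZs, Finset.mem_filter, Finset.mem_univ, true_and] at hz₀mem
  obtain ⟨hdz, hzd', hzψ⟩ := hz₀mem
  have hne : z₀ ≠ d' := by
    intro h; rw [h, hy'] at hzψ; exact absurd hzψ (by decide)
  have hlt : z₀ < d' := lt_of_le_of_ne hzd' hne
  -- a minimal element `w` with `z₀ < w ≤ d'`; then `z₀ ⋖ w`
  set Ws : Finset D := Finset.univ.filter (fun w : D => z₀ < w ∧ w ≤ d') with hWs
  have hd'W : d' ∈ Ws := by
    simp only [hWs, Finset.mem_filter, Finset.mem_univ, true_and]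
    exact ⟨hlt, le_refl d'⟩
  obtain ⟨w, hwmem, hmin⟩ := Ws.exists_minimal ⟨d', hd'W⟩
  simp only [hWs, Finset.mem_filter, Finset.mem_univ, true_and] at hwmem
  obtain ⟨hzw, hwd'⟩ := hwmem
  have hcov : z₀ ⋖ w := by
    refine ⟨hzw, fun c hzc hcw => ?_⟩
    refine absurd (hmin ?_ hcw.le) hcw.not_ge
    simp only [hWs, Finset.mem_filter, Finset.mem_univ, true_and]
    exact ⟨hzc, le_trans hcw.le hwd'⟩
  have hH : HasseRel (ψ₂ z₀) (ψ₂ w) := hh2 _ _ (Or.inr (Or.inl hcov))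
  have hle' : ψ₂ z₀ ≤ ψ₂ w := hm2 _ _ hcov.le
  rw [hzψ] at hH hle'
  rcases key2 (ψ₂ w) hH hle' with h0 | h1
  · -- `ψ₂ w = inl 0` contradicts maximality of `z₀`
    refine absurd (hmax ?_ hzw.le) hzw.not_ge
    simp only [hZs, Finset.mem_filter, Finset.mem_univ, true_and]
    exact ⟨le_trans hdz hcov.le, hwd', h0⟩
  · -- `ψ₂ w = inl 1`, so `χ w = a`, impossible between `inl 0` and `inl 2` in `PP`
    have hx0 : (Sum.inl 0 : PP) ≤ ψ₁ w := by
      rw [← hd]; exact hm1 d w (le_trans hdz hcov.le)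
    have hx2 : ψ₁ w ≤ (Sum.inl 2 : PP) := by
      rw [← hd']; exact hm1 w d' hwd'
    refine key3 (ψ₁ w) hx0 hx2 ?_
    rw [hχ w, h1]; decide
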